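/- Let n ∈ J. (a) If V = V₁ ∪_J V₂ is a J-saturated disjoint cover, then V(n:A) = V₁(n:A) ∪_J V₂(n:A) is a J-saturated disjoint cover, where V(n:A) = {⃗a(n:c) : ⃗a ∈ V, c ∈ A}. (b) If V(n:A) = V₁ ∪_J V₂ is a J-saturated disjoint cover, then V₁ = V₁(n:A) and V₂ = V₂(n:A). -/

import Mathlib

/-- Two valuations agree outside `J`: they take the same values on all coordinates not in `J`. -/
def AgreeOutside {ι A : Type*} (J : Set ι) (a b : ι → A) : Prop :=
  ∀ i, i ∉ J → a i = b i

/-- `𝒰` is a `J`-saturated disjoint cover of `V`. -/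
def IsSatDisjCover {ι A : Type*} (J : Set ι) (V : Set (ι → A))
    (𝒰 : Set (Set (ι → A))) : Prop :=
  ⋃₀ 𝒰 = V ∧ 𝒰.Pairwise Disjoint ∧
    ∀ a ∈ V, ∀ b ∈ V, AgreeOutside J a b → ∀ U ∈ 𝒰, a ∈ U → b ∈ U

/-- `V = V₁ ∪_J V₂`: a `J`-saturated disjoint (binary) cover of `V`. -/
def UnionJ {ι A : Type*} (J : Set ι) (V V₁ V₂ : Set (ι → A)) : Prop :=
  V₁ ∪ V₂ = V ∧ Disjoint V₁ V₂ ∧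
    ∀ a ∈ V, ∀ b ∈ V, AgreeOutside J a b →
      ((a ∈ V₁ → b ∈ V₁) ∧ (a ∈ V₂ → b ∈ V₂))

/-- `f : V → A` is independent of `J`. -/
def IndepOf {ι A : Type*} (J : Set ι) (V : Set (ι → A)) (f : (ι → A) → A) : Prop :=
  ∀ a ∈ V, ∀ b ∈ V, AgreeOutside J a b → f a = f b

/-- `V(n:f) = { ⃗a(n : f ⃗a) : ⃗a ∈ V }`. -/
def teamUpd {ι A : Type*} [DecidableEq ι] (n : ι) (f : (ι → A) → A)
    (V : Set (ι → A)) : Set (ι → A) :=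
  (fun a => Function.update a n (f a)) '' V

/-- `V(n:A) = { ⃗a(n : c) : ⃗a ∈ V, c ∈ A }`. -/
def teamExp {ι A : Type*} [DecidableEq ι] (n : ι) (V : Set (ι → A)) : Set (ι → A) :=
  {x | ∃ a ∈ V, ∃ c : A, x = Function.update a n c}

lemma agree_of_update {ι A : Type*} [DecidableEq ι] {J : Set ι} {n : ι} (hn : n ∈ J)
    {a b : ι → A} {c d : A} (h : AgreeOutside J (Function.update a n c) (Function.update b n d)) :
    AgreeOutside J a b := by
  intro i hi
  have hni : i ≠ n := fun h' => hi (h' ▸ hn)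
  have := h i hi
  rwa [Function.update_of_ne hni, Function.update_of_ne hni] at this

lemma update_agree {ι A : Type*} [DecidableEq ι] {J : Set ι} {n : ι} (hn : n ∈ J)
    {a b : ι → A} (h : AgreeOutside J a b) (c d : A) :
    AgreeOutside J (Function.update a n c) (Function.update b n d) := by
  intro i hi
  have hni : i ≠ n := fun h' => hi (h' ▸ hn)
  rw [Function.update_of_ne hni, Function.update_of_ne hni]
  exact h i hi

lemma mem_teamExp_self {ι A : Type*} [DecidableEq ι] {n : ι} {V : Set (ι → A)}
    {a : ι → A} (ha : a ∈ V) : a ∈ teamExp n V :=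
  ⟨a, ha, a n, (Function.update_eq_self n a).symm⟩

theorem teamExp_unionJ {ι A : Type*} [DecidableEq ι] (J : Set ι) (n : ι) (hn : n ∈ J)
    (V V₁ V₂ : Set (ι → A)) :
    (UnionJ J V V₁ V₂ → UnionJ J (teamExp n V) (teamExp n V₁) (teamExp n V₂)) ∧
    (UnionJ J (teamExp n V) V₁ V₂ → V₁ = teamExp n V₁ ∧ V₂ = teamExp n V₂) := by
  constructor
  · rintro ⟨hcov, hdisj, hsat⟩
    refine ⟨?_, ?_, ?_⟩
    · ext x
      constructor
      · rintro (⟨a, ha, c, rfl⟩ | ⟨a, ha, c, rfl⟩)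
        · exact ⟨a, hcov ▸ Or.inl ha, c, rfl⟩
        · exact ⟨a, hcov ▸ Or.inr ha, c, rfl⟩
      · rintro ⟨a, ha, c, rfl⟩
        rcases (hcov ▸ ha : a ∈ V₁ ∪ V₂) with h | h
        · exact Or.inl ⟨a, h, c, rfl⟩
        · exact Or.inr ⟨a, h, c, rfl⟩
    · rw [Set.disjoint_left]
      rintro x ⟨a, ha, c, rfl⟩ ⟨b, hb, d, hx⟩
      have hab : AgreeOutside J a b := by
        apply agree_of_update hn (c := c) (d := d)
        rw [← hx]
        exact fun i _ => rfl
      have hb1 : b ∈ V₁ :=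
        (hsat a (hcov ▸ Or.inl ha) b (hcov ▸ Or.inr hb) hab).1 ha
      exact (Set.disjoint_left.mp hdisj hb1) hb
    · rintro x ⟨a, ha, c, rfl⟩ y ⟨b, hb, d, rfl⟩ hxy
      have hab : AgreeOutside J a b := agree_of_update hn hxy
      have := hsat a ha b hb hab
      exact ⟨fun ⟨a', ha', c', hx⟩ => by
        have ha'b : AgreeOutside J a' b := by
          apply agree_of_update hn (c := c') (d := d)
          apply update_agree hn _ c' d
          intro i hi
          have hni : i ≠ n := fun h' => hi (h' ▸ hn)
          have := congrFun hx i
          rw [Function.update_of_ne hni, Function.update_of_ne hni] at this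
          exact this.symm.trans (hab i hi)
        have : b ∈ V₁ := (hsat a' (hcov ▸ Or.inl ha') b hb (fun i hi => by
          have hni : i ≠ n := fun h' => hi (h' ▸ hn)
          have h1 := congrFun hx i
          rw [Function.update_of_ne hni, Function.update_of_ne hni] at h1
          exact h1.symm.trans (hab i hi))).1 ha'
        exact ⟨b, this, d, rfl⟩,
        fun ⟨a', ha', c', hx⟩ => by
        have : b ∈ V₂ := (hsat a' (hcov ▸ Or.inr ha') b hb (fun i hi => by
          have hni : i ≠ n := fun h' => hi (h' ▸ hn)
          have h1 := congrFun hx i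
          rw [Function.update_of_ne hni, Function.update_of_ne hni] at h1
          exact h1.symm.trans (hab i hi))).2 ha'
        exact ⟨b, this, d, rfl⟩⟩
  · rintro ⟨hcov, hdisj, hsat⟩
    have key : ∀ W ∈ [V₁, V₂], True := fun _ _ => trivial
    have sub1 : ∀ a ∈ teamExp n V₁, a ∈ teamExp n V := by
      rintro x ⟨a, ha, c, rfl⟩
      have : a ∈ teamExp n V := hcov ▸ Or.inl ha
      obtain ⟨b, hb, d, rfl⟩ := this
      exact ⟨b, hb, c, by rw [Function.update_idem]⟩
    have sub2 : ∀ a ∈ teamExp n V₂, a ∈ teamExp n V := by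
      rintro x ⟨a, ha, c, rfl⟩
      have : a ∈ teamExp n V := hcov ▸ Or.inr ha
      obtain ⟨b, hb, d, rfl⟩ := this
      exact ⟨b, hb, c, by rw [Function.update_idem]⟩
    constructor
    · apply Set.Subset.antisymm
      · exact fun a ha => mem_teamExp_self ha
      · rintro x ⟨a, ha, c, rfl⟩
        have hx : Function.update a n c ∈ teamExp n V := sub1 _ ⟨a, ha, c, rfl⟩
        have haV : a ∈ teamExp n V := hcov ▸ Or.inl ha
        have hagree : AgreeOutside J a (Function.update a n c) := fun i hi =>
          (Function.update_of_ne (fun h' : i = n => hi (h' ▸ hn)) c a).symm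
        exact (hsat a haV _ hx hagree).1 ha
    · apply Set.Subset.antisymm
      · exact fun a ha => mem_teamExp_self ha
      · rintro x ⟨a, ha, c, rfl⟩
        have hx : Function.update a n c ∈ teamExp n V := sub2 _ ⟨a, ha, c, rfl⟩
        have haV : a ∈ teamExp n V := hcov ▸ Or.inr ha
        have hagree : AgreeOutside J a (Function.update a n c) := fun i hi =>
          (Function.update_of_ne (fun h' : i = n => hi (h' ▸ hn)) c a).symm
        exact (hsat a haV _ hx hagree).2 ha
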